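/- Let q be a power of an odd prime. The subset H of 𝓜 consisting of the matrices [[a,b,0],[c,d,0],[0,0,1]] with a,b,c,d ∈ 𝔽_q and ad − bc = 1 is a normal subgroup of 𝓜 isomorphic to SL(2,q), and H equals the commutator subgroup of 𝓜. -/

import Mathlib

open scoped commutatorElement

section Aux
variable {K : Type*} [Field K]

private def eM (a b c d : K) : Matrix (Fin 3) (Fin 3) K := !![a,b,0;c,d,0;0,0,1]

private lemma eM_mul (a b c d a' b' c' d' : K) :
    eM a b c d * eM a' b' c' d' =
      eM (a*a'+b*c') (a*b'+b*d') (c*a'+d*c') (c*b'+d*d') := by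
  unfold eM
  ext i j
  fin_cases i <;> fin_cases j <;>
    simp [Matrix.mul_apply, Fin.sum_univ_three]

private lemma eM_one : (eM 1 0 0 1 : Matrix (Fin 3) (Fin 3) K) = 1 := by
  unfold eM; rw [Matrix.one_fin_three]

private lemma det_eM (a b c d : K) : (eM a b c d).det = a*d - b*c := by
  rw [Matrix.det_fin_three]; simp [eM]

private lemma eM_map {L : Type*} [Field L] (f : K →+* L) (a b c d : K) :
    (eM a b c d).map f = eM (f a) (f b) (f c) (f d) := by
  unfold eM
  ext i j
  fin_cases i <;> fin_cases j <;> simp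

private lemma eM_congr {a b c d a' b' c' d' : K} (h1 : a = a') (h2 : b = b')
    (h3 : c = c') (h4 : d = d') : eM a b c d = eM a' b' c' d' := by
  rw [h1, h2, h3, h4]

private lemma eM_eq_one {a b c d : K} (h1 : a = 1) (h2 : b = 0) (h3 : c = 0)
    (h4 : d = 1) : eM a b c d = 1 := by
  rw [h1, h2, h3, h4]; exact eM_one

private lemma eM_inj {a b c d a' b' c' d' : K}
    (h : eM a b c d = eM a' b' c' d') : a = a' ∧ b = b' ∧ c = c' ∧ d = d' := by
  unfold eM at h
  refine ⟨?_, ?_, ?_, ?_⟩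
  · simpa using congrFun (congrFun h 0) 0
  · simpa using congrFun (congrFun h 0) 1
  · simpa using congrFun (congrFun h 1) 0
  · simpa using congrFun (congrFun h 1) 1

private lemma unit_inv_coe (u : GL (Fin 3) K) (a b c d : K)
    (h : (↑u : Matrix (Fin 3) (Fin 3) K) = eM a b c d) :
    (a*d - b*c) ≠ 0 ∧
    (↑(u⁻¹) : Matrix (Fin 3) (Fin 3) K)
      = eM (d*(a*d-b*c)⁻¹) (-(b*(a*d-b*c)⁻¹)) (-(c*(a*d-b*c)⁻¹)) (a*(a*d-b*c)⁻¹) := by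
  have hu : IsUnit (↑u : Matrix (Fin 3) (Fin 3) K) := ⟨u, rfl⟩
  have hdet : IsUnit (↑u : Matrix (Fin 3) (Fin 3) K).det :=
    (Matrix.isUnit_iff_isUnit_det _).mp hu
  rw [h, det_eM] at hdet
  have hδ : a*d - b*c ≠ 0 := hdet.ne_zero
  refine ⟨hδ, ?_⟩
  rw [Matrix.coe_units_inv]
  apply Matrix.inv_eq_right_inv
  rw [h, eM_mul]
  exact eM_eq_one (by field_simp; try ring) (by field_simp; try ring)
    (by field_simp; try ring) (by linear_combination mul_inv_cancel₀ hδ)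

private def sM (l : K) : Matrix (Fin 3) (Fin 3) K := eM l 0 0 l

private lemma sM_mul_eM (l a b c d : K) :
    sM l * eM a b c d = eM (a*l) (b*l) (c*l) (d*l) := by
  unfold sM; rw [eM_mul]
  exact eM_congr (by ring) (by ring) (by ring) (by ring)

private lemma sM_comm (l a b c d : K) :
    eM a b c d * sM l = sM l * eM a b c d := by
  unfold sM; rw [eM_mul, eM_mul]
  exact eM_congr (by ring) (by ring) (by ring) (by ring)

private lemma sM_mul_sM (l m : K) : sM l * sM m = sM (l*m) := by
  unfold sM; rw [eM_mul]
  exact eM_congr (by ring) (by ring) (by ring) (by ring)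

private lemma sM_one : (sM 1 : Matrix (Fin 3) (Fin 3) K) = 1 := eM_one

private lemma shuffle4 {Mo : Type*} [Monoid Mo] (s₁ s₂ t₁ t₂ g₁ g₂ h₁ h₂ : Mo)
    (c1 : g₁ * s₂ = s₂ * g₁) (c2 : g₁ * t₁ = t₁ * g₁) (c3 : g₂ * t₁ = t₁ * g₂)
    (c4 : g₁ * t₂ = t₂ * g₁) (c5 : g₂ * t₂ = t₂ * g₂) (c6 : h₁ * t₂ = t₂ * h₁) :
    (s₁*g₁)*(s₂*g₂)*(t₁*h₁)*(t₂*h₂) = (s₁*(s₂*(t₁*t₂)))*(g₁*(g₂*(h₁*h₂))) := by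
  have l : ∀ a b x : Mo, a*b = b*a → a*(b*x) = b*(a*x) := fun a b x hab => by
    rw [← mul_assoc, hab, mul_assoc]
  simp only [mul_assoc]
  rw [l g₁ s₂ _ c1, l h₁ t₂ _ c6, l g₂ t₁ _ c3, l g₁ t₁ _ c2, l g₂ t₂ _ c5,
    l g₁ t₂ _ c4]

private lemma shuffle3 {Mo : Type*} [Monoid Mo] (s₁ t₁ g₁ g₂ h₁ : Mo)
    (c2 : g₁ * t₁ = t₁ * g₁) (c3 : g₂ * t₁ = t₁ * g₂) :
    (s₁*g₁)*g₂*(t₁*h₁) = (s₁*t₁)*(g₁*(g₂*h₁)) := by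
  have l : ∀ a b x : Mo, a*b = b*a → a*(b*x) = b*(a*x) := fun a b x hab => by
    rw [← mul_assoc, hab, mul_assoc]
  simp only [mul_assoc]
  rw [l g₂ t₁ _ c3, l g₁ t₁ _ c2]

private def E12u (t : K) : GL (Fin 3) K :=
  Units.mk (eM 1 t 0 1) (eM 1 (-t) 0 1)
    (by rw [eM_mul]; exact eM_eq_one (by ring) (by ring) (by ring) (by ring))
    (by rw [eM_mul]; exact eM_eq_one (by ring) (by ring) (by ring) (by ring))

private def E21u (t : K) : GL (Fin 3) K :=
  Units.mk (eM 1 0 t 1) (eM 1 0 (-t) 1)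
    (by rw [eM_mul]; exact eM_eq_one (by ring) (by ring) (by ring) (by ring))
    (by rw [eM_mul]; exact eM_eq_one (by ring) (by ring) (by ring) (by ring))

private lemma coe_E12u (t : K) : (↑(E12u t) : Matrix (Fin 3) (Fin 3) K) = eM 1 t 0 1 := rfl
private lemma coe_E12u_inv (t : K) :
    (↑((E12u t)⁻¹) : Matrix (Fin 3) (Fin 3) K) = eM 1 (-t) 0 1 := rfl
private lemma coe_E21u (t : K) : (↑(E21u t) : Matrix (Fin 3) (Fin 3) K) = eM 1 0 t 1 := rfl
private lemma coe_E21u_inv (t : K) :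
    (↑((E21u t)⁻¹) : Matrix (Fin 3) (Fin 3) K) = eM 1 0 (-t) 1 := rfl

private def DDu (μ : K) (hμ : μ ≠ 0) : GL (Fin 3) K :=
  Units.mk (eM (-μ) 0 0 μ) (eM (-μ⁻¹) 0 0 μ⁻¹)
    (by rw [eM_mul]
        exact eM_eq_one (by field_simp; ring) (by ring) (by ring) (by field_simp; ring))
    (by rw [eM_mul]
        exact eM_eq_one (by field_simp; ring) (by ring) (by ring) (by field_simp; ring))

private lemma coe_DDu (μ : K) (hμ : μ ≠ 0) :
    (↑(DDu μ hμ) : Matrix (Fin 3) (Fin 3) K) = eM (-μ) 0 0 μ := rfl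
private lemma coe_DDu_inv (μ : K) (hμ : μ ≠ 0) :
    (↑((DDu μ hμ)⁻¹) : Matrix (Fin 3) (Fin 3) K) = eM (-μ⁻¹) 0 0 μ⁻¹ := rfl

private lemma comm12 (μ t : K) (hμ : μ ≠ 0) :
    ⁅DDu μ hμ, E12u t⁆ = E12u (-(2*t)) := by
  apply Units.ext
  rw [commutatorElement_def]
  show Units.val (DDu μ hμ) * Units.val (E12u t) * Units.val ((DDu μ hμ)⁻¹)
      * Units.val ((E12u t)⁻¹) = Units.val (E12u (-(2*t)))
  rw [coe_DDu, coe_E12u, coe_DDu_inv, coe_E12u_inv, coe_E12u, eM_mul, eM_mul, eM_mul]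
  exact eM_congr (by field_simp; ring) (by field_simp; try ring) (by ring) (by field_simp; ring)

private lemma comm21 (μ t : K) (hμ : μ ≠ 0) :
    ⁅DDu μ hμ, E21u t⁆ = E21u (-(2*t)) := by
  apply Units.ext
  rw [commutatorElement_def]
  show Units.val (DDu μ hμ) * Units.val (E21u t) * Units.val ((DDu μ hμ)⁻¹)
      * Units.val ((E21u t)⁻¹) = Units.val (E21u (-(2*t)))
  rw [coe_DDu, coe_E21u, coe_DDu_inv, coe_E21u_inv, coe_E21u, eM_mul, eM_mul, eM_mul]
  exact eM_congr (by field_simp; ring) (by ring) (by field_simp; try ring) (by field_simp; ring)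

private lemma decomp (u : GL (Fin 3) K) (a b c d : K)
    (h : (↑u : Matrix (Fin 3) (Fin 3) K) = eM a b c d)
    (hdet : a*d - b*c = 1) (hc : c ≠ 0) :
    u = E12u ((a-1)/c) * E21u c * E12u ((d-1)/c) := by
  apply Units.ext
  show (↑u : Matrix (Fin 3) (Fin 3) K) = Units.val (E12u ((a-1)/c)) * Units.val (E21u c) * Units.val (E12u ((d-1)/c))
  rw [h, coe_E12u, coe_E21u, coe_E12u, eM_mul, eM_mul]
  exact eM_congr (by field_simp; ring) (by field_simp; try linear_combination -hdet)
    (by field_simp; ring) (by field_simp; try ring)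

end Aux
section Iso
variable {F : Type} [Field F] {Fq : Subfield F}

private def vE (g : Matrix.SpecialLinearGroup (Fin 2) Fq) (i j : Fin 2) : F :=
  ((g : Matrix (Fin 2) (Fin 2) Fq) i j : F)

private lemma vE_det (g : Matrix.SpecialLinearGroup (Fin 2) Fq) :
    vE g 0 0 * vE g 1 1 - vE g 0 1 * vE g 1 0 = 1 := by
  have h1 : (g : Matrix (Fin 2) (Fin 2) Fq).det = 1 := g.2
  rw [Matrix.det_fin_two] at h1
  have := congrArg (Subfield.subtype Fq) h1
  push_cast at this
  simpa [vE] using this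

private lemma vE_mul (g h : Matrix.SpecialLinearGroup (Fin 2) Fq) (i j : Fin 2) :
    vE (g * h) i j = vE g i 0 * vE h 0 j + vE g i 1 * vE h 1 j := by
  show (((g * h : Matrix.SpecialLinearGroup (Fin 2) Fq) :
      Matrix (Fin 2) (Fin 2) Fq) i j : F) = _
  rw [Matrix.SpecialLinearGroup.coe_mul, Matrix.mul_apply, Fin.sum_univ_two]
  push_cast
  rfl

set_option maxHeartbeats 1600000 in
private def toGL3 (Fq : Subfield F) :
    Matrix.SpecialLinearGroup (Fin 2) Fq →* Matrix.GeneralLinearGroup (Fin 3) F where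
  toFun g :=
    Units.mk (eM (vE g 0 0) (vE g 0 1) (vE g 1 0) (vE g 1 1))
      (eM (vE g 1 1) (-(vE g 0 1)) (-(vE g 1 0)) (vE g 0 0))
      (by rw [eM_mul]
          exact eM_eq_one (by linear_combination vE_det g) (by ring) (by ring)
            (by linear_combination vE_det g))
      (by rw [eM_mul]
          exact eM_eq_one (by linear_combination vE_det g) (by ring) (by ring)
            (by linear_combination vE_det g))
  map_one' := by
    apply Units.ext
    show eM (vE 1 0 0) (vE 1 0 1) (vE 1 1 0) (vE 1 1 1) = 1
    exact eM_eq_one (by simp [vE]) (by simp [vE]) (by simp [vE]) (by simp [vE])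
  map_mul' g h := by
    apply Units.ext
    show eM (vE (g*h) 0 0) (vE (g*h) 0 1) (vE (g*h) 1 0) (vE (g*h) 1 1)
      = eM (vE g 0 0) (vE g 0 1) (vE g 1 0) (vE g 1 1)
        * eM (vE h 0 0) (vE h 0 1) (vE h 1 0) (vE h 1 1)
    rw [eM_mul]
    exact eM_congr (vE_mul g h 0 0) (vE_mul g h 0 1) (vE_mul g h 1 0) (vE_mul g h 1 1)

private lemma toGL3_coe (g : Matrix.SpecialLinearGroup (Fin 2) Fq) :
    (↑(toGL3 Fq g) : Matrix (Fin 3) (Fin 3) F)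
      = eM (vE g 0 0) (vE g 0 1) (vE g 1 0) (vE g 1 1) := rfl

set_option maxHeartbeats 3200000 in
private lemma iso_lemma (Fq : Subfield F)
    (H : Subgroup (Matrix.GeneralLinearGroup (Fin 3) F))
    (hH : ∀ g : Matrix.GeneralLinearGroup (Fin 3) F, g ∈ H ↔ ∃ a b c d : F,
      (g : Matrix (Fin 3) (Fin 3) F) = !![a, b, 0; c, d, 0; 0, 0, 1] ∧
      a ∈ Fq ∧ b ∈ Fq ∧ c ∈ Fq ∧ d ∈ Fq ∧ a * d - b * c = 1) :
    Nonempty (H ≃* Matrix.SpecialLinearGroup (Fin 2) Fq) := by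
  classical
  have hmem : ∀ g : Matrix.SpecialLinearGroup (Fin 2) Fq, toGL3 Fq g ∈ H := by
    intro g
    refine (hH _).mpr ⟨vE g 0 0, vE g 0 1, vE g 1 0, vE g 1 1, toGL3_coe g,
      ?_, ?_, ?_, ?_, vE_det g⟩ <;> exact SetLike.coe_mem _
  have hinj : Function.Injective (toGL3 Fq) := by
    rw [injective_iff_map_eq_one]
    intro g hg
    have hcoe := congrArg (Units.val) hg
    rw [toGL3_coe, Units.val_one, ← eM_one] at hcoe
    obtain ⟨h00, h01, h10, h11⟩ := eM_inj hcoe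
    apply Subtype.ext
    ext i j
    fin_cases i <;> fin_cases j
    · simpa [vE, Matrix.one_apply] using h00
    · simpa [vE, Matrix.one_apply] using h01
    · simpa [vE, Matrix.one_apply] using h10
    · simpa [vE, Matrix.one_apply] using h11
  have hsurj : ∀ x : Matrix.GeneralLinearGroup (Fin 3) F, x ∈ H →
      ∃ g : Matrix.SpecialLinearGroup (Fin 2) Fq, toGL3 Fq g = x := by
    intro x hx
    obtain ⟨a, b, c, d, hcoe, ha, hb, hc, hd, hdet⟩ := (hH x).mp hx
    have hdet2 : (!![(⟨a, ha⟩ : Fq), ⟨b, hb⟩; ⟨c, hc⟩, ⟨d, hd⟩] :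
        Matrix (Fin 2) (Fin 2) Fq).det = 1 := by
      rw [Matrix.det_fin_two]
      apply Subtype.ext
      push_cast
      simpa using hdet
    refine ⟨⟨!![(⟨a, ha⟩ : Fq), ⟨b, hb⟩; ⟨c, hc⟩, ⟨d, hd⟩], hdet2⟩, ?_⟩
    apply Units.ext
    show eM (vE _ 0 0) (vE _ 0 1) (vE _ 1 0) (vE _ 1 1) = _
    rw [hcoe]
    exact eM_congr (by simp [vE]) (by simp [vE]) (by simp [vE]) (by simp [vE])
  let f1 : Matrix.SpecialLinearGroup (Fin 2) Fq →* H := (toGL3 Fq).codRestrict H hmem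
  have hinj1 : Function.Injective f1 := fun g h hgh => hinj (congrArg Subtype.val hgh)
  have hsurj1 : Function.Surjective f1 := by
    intro x
    obtain ⟨g, hg⟩ := hsurj x x.2
    exact ⟨g, Subtype.ext hg⟩
  exact ⟨(MulEquiv.ofBijective f1 ⟨hinj1, hsurj1⟩).symm⟩

end Iso
set_option maxHeartbeats 4000000 in
/-- Let `q` be a power of an odd prime.  The subset `H` of `𝓜`
consisting of the matrices `[[a,b,0],[c,d,0],[0,0,1]]` with `a,b,c,d ∈ 𝔽_q` and
`ad - bc = 1` is a normal subgroup of `𝓜` isomorphic to `SL(2,q)`, and `H` is the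
commutator subgroup of `𝓜`. -/
theorem stmt_1 (p : ℕ) (hp : p.Prime) (hodd : p ≠ 2) (h : ℕ) (hh : 1 ≤ h)
    (q : ℕ) (hq : q = p ^ h)
    (F : Type) [Field F] [Fintype F] (hF : Fintype.card F = q ^ 2)
    (Fq : Subfield F) (hFq : ∀ x : F, x ∈ Fq ↔ x ^ q = x)
    (M : Subgroup (Matrix.GeneralLinearGroup (Fin 3) F))
    (hM : ∀ g : Matrix.GeneralLinearGroup (Fin 3) F, g ∈ M ↔ ∃ a b c d : F,
      (g : Matrix (Fin 3) (Fin 3) F) = !![a, b, 0; c, d, 0; 0, 0, 1] ∧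
      a * c ^ q - a ^ q * c = 0 ∧ b * d ^ q - b ^ q * d = 0 ∧
      b * c ^ q - a ^ q * d = -1 ∧ a * d ^ q - b ^ q * c = 1)
    (H : Subgroup (Matrix.GeneralLinearGroup (Fin 3) F))
    (hH : ∀ g : Matrix.GeneralLinearGroup (Fin 3) F, g ∈ H ↔ ∃ a b c d : F,
      (g : Matrix (Fin 3) (Fin 3) F) = !![a, b, 0; c, d, 0; 0, 0, 1] ∧
      a ∈ Fq ∧ b ∈ Fq ∧ c ∈ Fq ∧ d ∈ Fq ∧ a * d - b * c = 1) :
    H ≤ M ∧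
    (∀ g ∈ M, ∀ x ∈ H, g * x * g⁻¹ ∈ H) ∧
    Nonempty (H ≃* Matrix.SpecialLinearGroup (Fin 2) Fq) ∧
    ⁅M, M⁆ = H := by
  classical
  -- numerics
  have hp2 : 2 ≤ p := hp.two_le
  have hp3 : 3 ≤ p := by omega
  have hq3 : 3 ≤ q := by
    have : p ≤ p ^ h := Nat.le_self_pow (by omega) p
    omega
  have hq0 : q ≠ 0 := by omega
  have hqodd : Odd q := by rw [hq]; exact (hp.odd_of_ne_two hodd).pow
  have hqmod : q % 2 = 1 := Nat.odd_iff.mp hqodd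
  -- characteristic
  haveI hpfact : Fact p.Prime := ⟨hp⟩
  haveI hcharF : CharP F p := by
    obtain ⟨n, hcn, hcard⟩ := FiniteField.card F (ringChar F)
    have heq : ringChar F ^ (n : ℕ) = p ^ (2 * h) := by
      rw [← hcard, hF, hq, ← pow_mul, mul_comm]
    have hdvd : ringChar F ∣ p ^ (2 * h) := by
      rw [← heq]; exact dvd_pow_self _ n.ne_zero
    have : ringChar F = p :=
      (Nat.prime_dvd_prime_iff_eq hcn hp).mp (hcn.dvd_of_dvd_pow hdvd)
    rw [← this]; exact ringChar.charP F
  haveI : ExpChar F p := ExpChar.prime hp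
  obtain ⟨φ, hφ⟩ : ∃ φ : F →+* F, ∀ x, φ x = x ^ q :=
    ⟨iterateFrobenius F p h, fun x => by rw [iterateFrobenius_def, hq]⟩
  have hFq' : ∀ x : F, x ∈ Fq ↔ φ x = x := fun x => by rw [hFq, hφ]
  have h2F : (2 : F) ≠ 0 := by
    intro hcontra
    have := (CharP.cast_eq_zero_iff F p 2).mp hcontra
    have := (Nat.prime_dvd_prime_iff_eq hp Nat.prime_two).mp this
    exact hodd this
  -- a scalar μ with μ^q * μ = -1
  obtain ⟨μ, hμ0, hμq⟩ : ∃ μ : F, μ ≠ 0 ∧ μ ^ q * μ = -1 := by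
    obtain ⟨ζ, hζ⟩ := IsCyclic.exists_generator (α := Fˣ)
    have hord : orderOf ζ = q ^ 2 - 1 := by
      rw [orderOf_eq_card_of_forall_mem_zpowers hζ, Nat.card_eq_fintype_card,
        Fintype.card_units, hF]
    obtain ⟨n, hn2, hn1⟩ : ∃ n, 2 * n = q - 1 ∧ 1 ≤ n := ⟨(q - 1) / 2, by omega, by omega⟩
    have hsq : q ^ 2 = (q - 1) * (q + 1) + 1 := by
      rcases Nat.exists_eq_add_of_le (show 1 ≤ q by omega) with ⟨k, hk⟩
      subst hk
      have h1 : (1 + k) ^ 2 = k * (1 + k + 1) + 1 := by ring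
      have h2 : 1 + k - 1 = k := by omega
      rw [h1, h2]
    have hkey : 2 * (n * (q + 1)) = q ^ 2 - 1 := by
      have : 2 * (n * (q + 1)) = (2 * n) * (q + 1) := by ring
      rw [this, hn2]; omega
    have hx2 : (ζ ^ (n * (q + 1))) ^ 2 = 1 := by
      rw [← pow_mul]
      have : n * (q + 1) * 2 = q ^ 2 - 1 := by omega
      rw [this, ← hord, pow_orderOf_eq_one]
    have hxne : ζ ^ (n * (q + 1)) ≠ 1 := by
      intro hone
      have hdvd := orderOf_dvd_of_pow_eq_one hone
      rw [hord] at hdvd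
      have hpos : 0 < n * (q + 1) := by positivity
      have hle := Nat.le_of_dvd hpos hdvd
      omega
    refine ⟨((ζ : Fˣ) : F) ^ n, pow_ne_zero _ (Units.ne_zero ζ), ?_⟩
    have hval : (((ζ : Fˣ) : F) ^ n) ^ q * ((ζ : Fˣ) : F) ^ n
        = ((ζ ^ (n * (q + 1)) : Fˣ) : F) := by
      rw [← pow_mul, ← pow_add, Units.val_pow_eq_pow_val]
      congr 1
      all_goals ring
    rw [hval]
    have h2 : ((ζ ^ (n * (q + 1)) : Fˣ) : F) * ((ζ ^ (n * (q + 1)) : Fˣ) : F) = 1 := by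
      rw [← Units.val_mul, ← sq, hx2, Units.val_one]
    have hne1 : ((ζ ^ (n * (q + 1)) : Fˣ) : F) ≠ 1 :=
      fun hh => hxne (Units.ext (by simpa using hh))
    rcases mul_self_eq_one_iff.mp h2 with h' | h'
    · exact absurd h' hne1
    · exact h'
  -- H ≤ M
  have hHleM : H ≤ M := by
    intro x hx
    obtain ⟨a, b, c, d, hcoe, ha, hb, hc, hd, hdet⟩ := (hH x).mp hx
    have ha' : a ^ q = a := (hFq a).mp ha
    have hb' : b ^ q = b := (hFq b).mp hb
    have hc' : c ^ q = c := (hFq c).mp hc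
    have hd' : d ^ q = d := (hFq d).mp hd
    exact (hM x).mpr ⟨a, b, c, d, hcoe,
      by rw [hc', ha']; ring, by rw [hd', hb']; ring,
      by rw [hc', ha']; linear_combination -hdet,
      by rw [hd', hb']; linear_combination hdet⟩
  -- scaling data for elements of M
  have hscale : ∀ g ∈ M, ∃ lam : F, lam ≠ 0 ∧
      (∃ a b c d : F, (↑g : Matrix (Fin 3) (Fin 3) F) = eM a b c d) ∧
      (∃ a b c d : F, (↑(g⁻¹) : Matrix (Fin 3) (Fin 3) F) = eM a b c d) ∧
      ((↑g : Matrix (Fin 3) (Fin 3) F)).map φ = sM lam * (↑g : Matrix (Fin 3) (Fin 3) F) ∧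
      ((↑(g⁻¹) : Matrix (Fin 3) (Fin 3) F)).map φ
        = sM lam⁻¹ * (↑(g⁻¹) : Matrix (Fin 3) (Fin 3) F) := by
    intro g hg
    obtain ⟨a, b, c, d, hcoe0, h1, h2, h3, h4⟩ := (hM g).mp hg
    have hcoe : (↑g : Matrix (Fin 3) (Fin 3) F) = eM a b c d := hcoe0
    obtain ⟨hδ, hinv⟩ := unit_inv_coe g a b c d hcoe
    have ha0 : a ^ q * (a*d - b*c) = a := by linear_combination (-a) * h3 + b * h1
    have hb0 : b ^ q * (a*d - b*c) = b := by linear_combination b * h4 - a * h2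
    have hc0 : c ^ q * (a*d - b*c) = c := by linear_combination d * h1 - c * h3
    have hd0 : d ^ q * (a*d - b*c) = d := by linear_combination d * h4 - c * h2
    have ha : φ a = a * (a*d-b*c)⁻¹ := by rw [hφ]; field_simp; linear_combination ha0
    have hb : φ b = b * (a*d-b*c)⁻¹ := by rw [hφ]; field_simp; linear_combination hb0
    have hc : φ c = c * (a*d-b*c)⁻¹ := by rw [hφ, eq_mul_inv_iff_mul_eq₀ hδ]; linear_combination hc0
    have hd : φ d = d * (a*d-b*c)⁻¹ := by rw [hφ, eq_mul_inv_iff_mul_eq₀ hδ]; linear_combination hd0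
    have hδq : φ (a*d-b*c) = (a*d-b*c)⁻¹ := by
      rw [map_sub, map_mul, map_mul, ha, hb, hc, hd]
      field_simp
    refine ⟨(a*d-b*c)⁻¹, inv_ne_zero hδ, ⟨a,b,c,d,hcoe⟩, ⟨_,_,_,_,hinv⟩, ?_, ?_⟩
    · rw [hcoe, eM_map, sM_mul_eM]
      exact eM_congr ha hb hc hd
    · rw [hinv, eM_map, sM_mul_eM]
      refine eM_congr ?_ ?_ ?_ ?_
      · rw [map_mul, map_inv₀, hd, hδq]
      · rw [map_neg, map_mul, map_inv₀, hb, hδq]; ring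
      · rw [map_neg, map_mul, map_inv₀, hc, hδq]; ring
      · rw [map_mul, map_inv₀, ha, hδq]
  -- H elements are fixed by φ and have det 1
  have hHfix : ∀ x ∈ H, ((↑x : Matrix (Fin 3) (Fin 3) F)).map φ = ↑x ∧
      ((↑x : Matrix (Fin 3) (Fin 3) F)).det = 1 ∧
      (∃ a b c d : F, (↑x : Matrix (Fin 3) (Fin 3) F) = eM a b c d) := by
    intro x hx
    obtain ⟨a, b, c, d, hcoe0, ha, hb, hc, hd, hdet⟩ := (hH x).mp hx
    have hcoe : (↑x : Matrix (Fin 3) (Fin 3) F) = eM a b c d := hcoe0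
    refine ⟨?_, ?_, ⟨a,b,c,d,hcoe⟩⟩
    · rw [hcoe, eM_map]
      exact eM_congr ((hFq' a).mp ha) ((hFq' b).mp hb) ((hFq' c).mp hc) ((hFq' d).mp hd)
    · rw [hcoe, det_eM, hdet]
  -- determinants via the determinant homomorphism
  have hdetcomm : ∀ g₁ g₂ : Matrix.GeneralLinearGroup (Fin 3) F,
      ((↑⁅g₁, g₂⁆ : Matrix (Fin 3) (Fin 3) F)).det = 1 := by
    intro g₁ g₂
    have h1 : Units.map (Matrix.detMonoidHom) ⁅g₁, g₂⁆ = 1 := by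
      rw [map_commutatorElement]
      exact commutatorElement_eq_one_iff_mul_comm.mpr (mul_comm _ _)
    have h2 := congrArg (Units.val) h1
    exact h2
  have hdetconj : ∀ g x : Matrix.GeneralLinearGroup (Fin 3) F,
      ((↑(g * x * g⁻¹) : Matrix (Fin 3) (Fin 3) F)).det
        = ((↑x : Matrix (Fin 3) (Fin 3) F)).det := by
    intro g x
    have h1 : Units.map (Matrix.detMonoidHom) (g * x * g⁻¹)
        = Units.map (Matrix.detMonoidHom) x := by
      rw [map_mul, map_mul, map_inv,
        mul_comm (Units.map (Matrix.detMonoidHom) g) (Units.map (Matrix.detMonoidHom) x),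
        mul_inv_cancel_right]
    exact congrArg (Units.val) h1
  -- commutators of M lie in H
  have hcommH : ∀ g₁ ∈ M, ∀ g₂ ∈ M, ⁅g₁, g₂⁆ ∈ H := by
    intro g₁ hg₁ g₂ hg₂
    obtain ⟨l₁, hl₁, ⟨a1,b1,c1,d1,e1⟩, ⟨a1',b1',c1',d1',e1'⟩, hm₁, hm₁'⟩ := hscale g₁ hg₁
    obtain ⟨l₂, hl₂, ⟨a2,b2,c2,d2,e2⟩, ⟨a2',b2',c2',d2',e2'⟩, hm₂, hm₂'⟩ := hscale g₂ hg₂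
    have hcoe : (↑⁅g₁, g₂⁆ : Matrix (Fin 3) (Fin 3) F)
        = (↑g₁ : Matrix (Fin 3) (Fin 3) F) * (↑g₂ : Matrix (Fin 3) (Fin 3) F)
          * (↑(g₁⁻¹) : Matrix (Fin 3) (Fin 3) F) * (↑(g₂⁻¹) : Matrix (Fin 3) (Fin 3) F) := rfl
    obtain ⟨A, B, C, D, hk⟩ : ∃ A B C D : F,
        (↑⁅g₁, g₂⁆ : Matrix (Fin 3) (Fin 3) F) = eM A B C D := by
      rw [hcoe, e1, e2, e1', e2', eM_mul, eM_mul, eM_mul]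
      exact ⟨_, _, _, _, rfl⟩
    have hmap : ((↑⁅g₁, g₂⁆ : Matrix (Fin 3) (Fin 3) F)).map φ = ↑⁅g₁, g₂⁆ := by
      rw [hcoe, Matrix.map_mul, Matrix.map_mul, Matrix.map_mul, hm₁, hm₂, hm₁', hm₂',
        e1, e2, e1', e2',
        shuffle4 _ _ _ _ _ _ _ _ (sM_comm l₂ a1 b1 c1 d1) (sM_comm l₁⁻¹ a1 b1 c1 d1)
          (sM_comm l₁⁻¹ a2 b2 c2 d2) (sM_comm l₂⁻¹ a1 b1 c1 d1)
          (sM_comm l₂⁻¹ a2 b2 c2 d2) (sM_comm l₂⁻¹ a1' b1' c1' d1'),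
        sM_mul_sM, sM_mul_sM, sM_mul_sM,
        show l₁ * (l₂ * (l₁⁻¹ * l₂⁻¹)) = 1 by field_simp,
        sM_one, one_mul]
      simp only [mul_assoc]
    rw [hk, eM_map] at hmap
    obtain ⟨hA, hB, hC, hD⟩ := eM_inj hmap
    have hdet1 : A * D - B * C = 1 := by
      have h' := hdetcomm g₁ g₂
      rw [hk, det_eM] at h'
      exact h'
    exact (hH _).mpr ⟨A, B, C, D, hk, (hFq' A).mpr hA, (hFq' B).mpr hB,
      (hFq' C).mpr hC, (hFq' D).mpr hD, hdet1⟩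
  -- conjugation preserves H
  have hconj : ∀ g ∈ M, ∀ x ∈ H, g * x * g⁻¹ ∈ H := by
    intro g hg x hx
    obtain ⟨l, hl, ⟨a1,b1,c1,d1,e1⟩, ⟨a1',b1',c1',d1',e1'⟩, hm₁, hm₁'⟩ := hscale g hg
    obtain ⟨hxfix, hxdet, a2, b2, c2, d2, e2⟩ := hHfix x hx
    have hcoe : (↑(g * x * g⁻¹) : Matrix (Fin 3) (Fin 3) F)
        = (↑g : Matrix (Fin 3) (Fin 3) F) * (↑x : Matrix (Fin 3) (Fin 3) F)
          * (↑(g⁻¹) : Matrix (Fin 3) (Fin 3) F) := rfl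
    obtain ⟨A, B, C, D, hk⟩ : ∃ A B C D : F,
        (↑(g * x * g⁻¹) : Matrix (Fin 3) (Fin 3) F) = eM A B C D := by
      rw [hcoe, e1, e2, e1', eM_mul, eM_mul]
      exact ⟨_, _, _, _, rfl⟩
    have hmap : ((↑(g * x * g⁻¹) : Matrix (Fin 3) (Fin 3) F)).map φ = ↑(g * x * g⁻¹) := by
      rw [hcoe, Matrix.map_mul, Matrix.map_mul, hm₁, hxfix, hm₁', e1, e2, e1',
        shuffle3 _ _ _ _ _ (sM_comm l⁻¹ a1 b1 c1 d1) (sM_comm l⁻¹ a2 b2 c2 d2),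
        sM_mul_sM, show l * l⁻¹ = 1 by field_simp, sM_one, one_mul]
      simp only [mul_assoc]
    rw [hk, eM_map] at hmap
    obtain ⟨hA, hB, hC, hD⟩ := eM_inj hmap
    have hdet1 : A * D - B * C = 1 := by
      have h' := hdetconj g x
      rw [hk, det_eM, hxdet] at h'
      exact h'
    exact (hH _).mpr ⟨A, B, C, D, hk, (hFq' A).mpr hA, (hFq' B).mpr hB,
      (hFq' C).mpr hC, (hFq' D).mpr hD, hdet1⟩
  -- elementary matrices are in M
  have hE12M : ∀ t : F, φ t = t → E12u t ∈ M := by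
    intro t ht
    rw [hφ] at ht
    refine (hM _).mpr ⟨1, t, 0, 1, rfl, ?_, ?_, ?_, ?_⟩
    · simp [zero_pow hq0]
    · rw [one_pow, ht]; ring
    · simp [zero_pow hq0]
    · simp
  have hE21M : ∀ t : F, φ t = t → E21u t ∈ M := by
    intro t ht
    rw [hφ] at ht
    refine (hM _).mpr ⟨1, 0, t, 1, rfl, ?_, ?_, ?_, ?_⟩
    · rw [one_pow, ht]; ring
    · simp [zero_pow hq0]
    · simp [zero_pow hq0]
    · simp [zero_pow hq0]
  have hDM : DDu μ hμ0 ∈ M := by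
    refine (hM _).mpr ⟨-μ, 0, 0, μ, rfl, ?_, ?_, ?_, ?_⟩
    · simp [zero_pow hq0]
    · simp [zero_pow hq0]
    · rw [Odd.neg_pow hqodd]
      linear_combination hμq
    · linear_combination -hμq
  -- elementary matrices with entries in Fq are commutators
  have hgen12 : ∀ t : F, φ t = t → E12u t ∈ ⁅M, M⁆ := by
    intro t ht
    have hs : φ (-(t/2)) = -(t/2) := by rw [map_neg, map_div₀, ht, map_ofNat]
    have hmem := Subgroup.commutator_mem_commutator hDM (hE12M (-(t/2)) hs)
    rw [comm12] at hmem
    have harg : -(2 * -(t/2)) = t := by field_simp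
    rwa [harg] at hmem
  have hgen21 : ∀ t : F, φ t = t → E21u t ∈ ⁅M, M⁆ := by
    intro t ht
    have hs : φ (-(t/2)) = -(t/2) := by rw [map_neg, map_div₀, ht, map_ofNat]
    have hmem := Subgroup.commutator_mem_commutator hDM (hE21M (-(t/2)) hs)
    rw [comm21] at hmem
    have harg : -(2 * -(t/2)) = t := by field_simp
    rwa [harg] at hmem
  -- every element of H is in the commutator subgroup
  have hMMne : ∀ (u : Matrix.GeneralLinearGroup (Fin 3) F) (a b c d : F),
      (↑u : Matrix (Fin 3) (Fin 3) F) = eM a b c d → φ a = a → φ b = b → φ c = c →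
      φ d = d → a*d - b*c = 1 → c ≠ 0 → u ∈ ⁅M, M⁆ := by
    intro u a b c d hcoe ha hb hc hd hdet hcz
    rw [decomp u a b c d hcoe hdet hcz]
    have h1 : φ ((a-1)/c) = (a-1)/c := by rw [map_div₀, map_sub, ha, hc, map_one]
    have h2 : φ ((d-1)/c) = (d-1)/c := by rw [map_div₀, map_sub, hd, hc, map_one]
    exact Subgroup.mul_mem _ (Subgroup.mul_mem _ (hgen12 _ h1) (hgen21 _ hc)) (hgen12 _ h2)
  have hMM : ∀ (u : Matrix.GeneralLinearGroup (Fin 3) F) (a b c d : F),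
      (↑u : Matrix (Fin 3) (Fin 3) F) = eM a b c d → φ a = a → φ b = b → φ c = c →
      φ d = d → a*d - b*c = 1 → u ∈ ⁅M, M⁆ := by
    intro u a b c d hcoe ha hb hc hd hdet
    by_cases hcz : c = 0
    · have hcoe2 : (↑(u * E21u (1:F)) : Matrix (Fin 3) (Fin 3) F) = eM (a+b) b d d := by
        rw [Units.val_mul, hcoe, coe_E21u, eM_mul]
        exact eM_congr (by ring) (by ring) (by rw [hcz]; ring) (by rw [hcz]; ring)
      have hd0 : d ≠ 0 := by
        intro h0
        rw [hcz, h0] at hdet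
        norm_num at hdet
      have hdet2 : (a+b)*d - b*d = 1 := by
        rw [hcz] at hdet
        linear_combination hdet
      have hy := hMMne (u * E21u 1) (a+b) b d d hcoe2 (by rw [map_add, ha, hb]) hb hd hd
        hdet2 hd0
      have hxy : u = (u * E21u 1) * E21u (-1) := by
        have hE : E21u (1:F) * E21u (-1) = 1 := by
          apply Units.ext
          show Units.val (E21u (1:F)) * Units.val (E21u (-1:F)) = (1 : Matrix (Fin 3) (Fin 3) F)
          rw [coe_E21u, coe_E21u, eM_mul]
          exact eM_eq_one (by ring) (by ring) (by ring) (by ring)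
        rw [mul_assoc, hE, mul_one]
      rw [hxy]
      exact Subgroup.mul_mem _ hy (hgen21 (-1) (by rw [map_neg, map_one]))
    · exact hMMne u a b c d hcoe ha hb hc hd hdet hcz
  refine ⟨hHleM, hconj, iso_lemma Fq H hH, ?_⟩
  apply le_antisymm
  · exact Subgroup.commutator_le.mpr hcommH
  · intro x hx
    obtain ⟨a, b, c, d, hcoe0, ha, hb, hc, hd, hdet⟩ := (hH x).mp hx
    exact hMM x a b c d hcoe0 ((hFq' a).mp ha) ((hFq' b).mp hb) ((hFq' c).mp hc)
      ((hFq' d).mp hd) hdet
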